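/- If a directed graph G on n nodes is (r,s)-robust, then r ≤ ⌈n/2⌉, where ⌈·⌉ denotes the ceiling function. -/

import Mathlib

/- A directed graph on `n` nodes is given by its neighbor sets:
`j ∈ Nb i` means `(j, i)` is an edge, i.e. node `j` can send information to node `i`. -/

/-- `reachSet Nb r S` is the set `X^r_S` of nodes of `S` having at least `r`
neighbors outside `S`. -/
def reachSet {n : ℕ} (Nb : Fin n → Finset (Fin n)) (r : ℕ) (S : Finset (Fin n)) :
    Finset (Fin n) :=
  S.filter fun i => r ≤ ((Nb i) \ S).card

/-- `(r,s)`-robustness of the directed graph given by neighbor sets `Nb`. -/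
def IsRobust {n : ℕ} (Nb : Fin n → Finset (Fin n)) (r s : ℕ) : Prop :=
  ∀ V1 V2 : Finset (Fin n), V1.Nonempty → V2.Nonempty → Disjoint V1 V2 →
    reachSet Nb r V1 = V1 ∨ reachSet Nb r V2 = V2 ∨
      s ≤ (reachSet Nb r V1).card + (reachSet Nb r V2).card

/-- If `G` on `n` nodes is `(r,s)`-robust, then `r ≤ ⌈n/2⌉` (here `⌈n/2⌉ = (n+1)/2`
in natural-number arithmetic). -/
theorem robust_r_le_ceil {n r s : ℕ} (Nb : Fin n → Finset (Fin n))
    (hrn : r < n) (hs1 : 1 ≤ s) (hsn : s < n) (h : IsRobust Nb r s) :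
    r ≤ (n + 1) / 2 := by
  by_contra hr
  push_neg at hr
  set k := (n + 1) / 2 with hk
  have hkn : k < n := lt_trans hr hrn
  set a : Fin n := ⟨k, hkn⟩ with ha
  set V1 : Finset (Fin n) := Finset.Iio a with hV1
  set V2 : Finset (Fin n) := V1ᶜ with hV2
  have hcard1 : V1.card = k := by rw [hV1, Fin.card_Iio]
  have hcard2 : V2.card = n - k := by
    rw [hV2, Finset.card_compl, hcard1, Fintype.card_fin]
  have h1ne : V1.Nonempty := by
    refine ⟨⟨0, by omega⟩, ?_⟩
    rw [hV1, Finset.mem_Iio, Fin.lt_def]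
    show 0 < k
    omega
  have h2ne : V2.Nonempty := ⟨a, by simp [hV2, hV1]⟩
  have hdisj : Disjoint V1 V2 := disjoint_compl_right
  have hr1 : reachSet Nb r V1 = ∅ := by
    rw [Finset.eq_empty_iff_forall_notMem]
    intro i hi
    rw [reachSet, Finset.mem_filter] at hi
    have hsub : (Nb i) \ V1 ⊆ V2 := by
      intro x hx
      rw [Finset.mem_sdiff] at hx
      simp [hV2, hx.2]
    have := Finset.card_le_card hsub
    omega
  have hr2 : reachSet Nb r V2 = ∅ := by
    rw [Finset.eq_empty_iff_forall_notMem]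
    intro i hi
    rw [reachSet, Finset.mem_filter] at hi
    have hsub : (Nb i) \ V2 ⊆ V1 := by
      intro x hx
      rw [Finset.mem_sdiff] at hx
      have := hx.2
      simp [hV2] at this
      exact this
    have := Finset.card_le_card hsub
    omega
  rcases h V1 V2 h1ne h2ne hdisj with h' | h' | h'
  · exact h1ne.ne_empty (h' ▸ hr1)
  · exact h2ne.ne_empty (h' ▸ hr2)
  · rw [hr1, hr2] at h'
    simp at h'
    omega
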